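/- arXiv:2101.00516 — 4 statements merged into one kernel-verified Lean document; each statement's English description precedes it below -/
import Mathlib

section
/- If Y follows the standard q-Gaussian N_q(0,1) with 1 ≤ q < 5/3, then the second moment E(Y²) = (3-q)/(5-3q). -/
open MeasureTheory Real Filter Topology

/-- q-exponential (with cutoff), reducing to exp at q = 1. -/
noncomputable def qExp (q x : ℝ) : ℝ :=
  if q = 1 then Real.exp x else (max 0 (1 + (1 - q) * x)) ^ (1 / (1 - q))

/-- Normalizing constant C_q = ∫ e_q(-x²) dx. -/
noncomputable def Cq (q : ℝ) : ℝ := ∫ x : ℝ, qExp q (-(x ^ 2))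

/-- q-Gaussian density N_q(m,σ²) with β = 1/(3-q). -/
noncomputable def qGauss (q m σ x : ℝ) : ℝ :=
  Real.sqrt (1 / (3 - q)) / (σ * Cq q) * qExp q (-((1 / (3 - q)) * (x - m) ^ 2 / σ ^ 2))

lemma integrable_aux {c s : ℝ} (hc : 0 < c) (hs : 1/2 < s) :
    Integrable fun y : ℝ => (1 + c * y ^ 2) ^ (-s) := by
  have h := integrable_rpow_neg_one_add_norm_sq (E := ℝ) (μ := volume) (r := 2 * s)
    (by simp; linarith)
  have h' : Integrable fun x : ℝ => (1 + x ^ 2) ^ (-s) := by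
    have e : (fun x : ℝ => ((1:ℝ) + ‖x‖ ^ 2) ^ (-(2*s) / 2)) = fun x : ℝ => (1 + x ^ 2) ^ (-s) := by
      funext x
      rw [Real.norm_eq_abs, sq_abs]
      congr 1
      ring
    rwa [e] at h
  have h2 := h'.comp_mul_left' (R := Real.sqrt c) (by positivity)
  have e2 : (fun y : ℝ => ((1:ℝ) + (Real.sqrt c * y) ^ 2) ^ (-s)) = fun y : ℝ => (1 + c * y ^ 2) ^ (-s) := by
    funext y
    rw [mul_pow, Real.sq_sqrt hc.le]
  rwa [e2] at h2

lemma integrable_sq_aux {c s : ℝ} (hc : 0 < c) (hs : 3/2 < s) :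
    Integrable fun y : ℝ => y ^ 2 * (1 + c * y ^ 2) ^ (-s) := by
  have base : Integrable fun y : ℝ => c⁻¹ * (1 + c * y ^ 2) ^ (-(s-1)) :=
    (integrable_aux hc (by linarith)).const_mul _
  refine base.mono' ?_ (Eventually.of_forall fun y => ?_)
  · apply Measurable.aestronglyMeasurable
    fun_prop
  · have h0 : (0:ℝ) < 1 + c * y ^ 2 := by positivity
    rw [Real.norm_of_nonneg (by positivity)]
    have e : (1 + c * y ^ 2) ^ (-(s-1)) = (1 + c * y ^ 2) * (1 + c * y ^ 2) ^ (-s) := by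
      rw [show -(s-1) = 1 + -s by ring, Real.rpow_add h0, Real.rpow_one]
    rw [e, ← mul_assoc]
    apply mul_le_mul_of_nonneg_right _ (Real.rpow_nonneg h0.le _)
    rw [inv_mul_eq_div, le_div_iff₀ hc]
    nlinarith [sq_nonneg y]

lemma key_poly {c p : ℝ} (hc : 0 < c) (hp : 3/2 < p) :
    (∫ y : ℝ, (1 + c * y ^ 2) ^ (-p)) =
      (c * (2*p - 3)) * ∫ y : ℝ, y ^ 2 * (1 + c * y ^ 2) ^ (-p) := by
  have hpos : ∀ y : ℝ, (0:ℝ) < 1 + c * y ^ 2 := fun y => by positivity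
  have hIp : Integrable fun y : ℝ => (1 + c * y ^ 2) ^ (-p) := integrable_aux hc (by linarith)
  have hI1 : Integrable fun y : ℝ => (1 + c * y ^ 2) ^ (-(p-1)) := integrable_aux hc (by linarith)
  have hM : Integrable fun y : ℝ => y ^ 2 * (1 + c * y ^ 2) ^ (-p) := integrable_sq_aux hc hp
  -- pointwise decomposition
  have hdec : ∀ y : ℝ, (1 + c * y ^ 2) ^ (-(p-1))
      = (1 + c * y ^ 2) ^ (-p) + c * (y ^ 2 * (1 + c * y ^ 2) ^ (-p)) := by
    intro y
    rw [show -(p-1) = 1 + -p by ring, Real.rpow_add (hpos y), Real.rpow_one]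
    ring
  have hsum : (∫ y : ℝ, (1 + c * y ^ 2) ^ (-(p-1)))
      = (∫ y : ℝ, (1 + c * y ^ 2) ^ (-p)) + c * ∫ y : ℝ, y ^ 2 * (1 + c * y ^ 2) ^ (-p) := by
    rw [← integral_const_mul, ← integral_add hIp (hM.const_mul c)]
    exact integral_congr_ae (Eventually.of_forall hdec)
  -- integration by parts
  set F : ℝ → ℝ := fun y => y * (1 + c * y ^ 2) ^ (-(p-1)) with hF
  set F' : ℝ → ℝ := fun y => (1 + c * y ^ 2) ^ (-(p-1))
      - (2 * c * (p-1)) * (y ^ 2 * (1 + c * y ^ 2) ^ (-p)) with hF'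
  have hderiv : ∀ y : ℝ, HasDerivAt F (F' y) y := by
    intro y
    have h1 : HasDerivAt (fun y : ℝ => 1 + c * y ^ 2) (c * (2 * y)) y := by
      simpa using ((hasDerivAt_pow 2 y).const_mul c).const_add 1
    have h2 := h1.rpow_const (p := -(p-1)) (Or.inl (hpos y).ne')
    have h3 : HasDerivAt (fun y : ℝ => y * (1 + c * y ^ 2) ^ (-(p-1))) _ y := (hasDerivAt_id y).fun_mul h2
    convert h3 using 1
    simp only [hF', id_eq]
    rw [show -(p-1) - 1 = -p by ring]
    ring
  have hint : Integrable F' := hI1.sub (hM.const_mul _)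
  have htop : Tendsto F atTop (𝓝 0) := by
    have hb : Tendsto (fun y : ℝ => c ^ (-(p-1)) * y ^ (-(2*p-3))) atTop (𝓝 0) := by
      simpa using (tendsto_rpow_neg_atTop (y := 2*p-3) (by linarith)).const_mul (c ^ (-(p-1)))
    apply squeeze_zero' ?_ ?_ hb
    · filter_upwards [eventually_gt_atTop (0:ℝ)] with y hy
      exact mul_nonneg hy.le (Real.rpow_nonneg (hpos y).le _)
    · filter_upwards [eventually_gt_atTop (0:ℝ)] with y hy
      have h1 : (1 + c * y ^ 2) ^ (-(p-1)) ≤ (c * y ^ 2) ^ (-(p-1)) :=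
        Real.rpow_le_rpow_of_nonpos (by positivity) (by nlinarith) (by linarith)
      have h2 : (c * y ^ 2) ^ (-(p-1)) = c ^ (-(p-1)) * (y ^ 2) ^ (-(p-1)) :=
        Real.mul_rpow hc.le (sq_nonneg y)
      have h3 : y * (y ^ 2) ^ (-(p-1)) = y ^ (-(2*p-3)) := by
        rw [← Real.rpow_natCast y 2, ← Real.rpow_mul hy.le]
        nth_rewrite 1 [← Real.rpow_one y]
        rw [← Real.rpow_add hy]
        congr 1
        push_cast
        ring
      calc F y ≤ y * (c ^ (-(p-1)) * (y ^ 2) ^ (-(p-1))) := by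
            rw [← h2]; exact mul_le_mul_of_nonneg_left h1 hy.le
        _ = c ^ (-(p-1)) * y ^ (-(2*p-3)) := by rw [← h3]; ring
  have hbot : Tendsto F atBot (𝓝 0) := by
    have hcomp : Tendsto (fun y : ℝ => F (-y)) atBot (𝓝 0) :=
      htop.comp tendsto_neg_atBot_atTop
    have : (fun y : ℝ => F (-y)) = fun y => -F y := by
      funext y; simp only [hF, neg_sq]; ring
    rw [this] at hcomp
    simpa using hcomp.neg
  have hibp : (∫ y : ℝ, F' y) = 0 := by
    rw [integral_of_hasDerivAt_of_tendsto hderiv hint hbot htop]; ring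
  have hsplit : (∫ y : ℝ, F' y)
      = (∫ y : ℝ, (1 + c * y ^ 2) ^ (-(p-1)))
        - (2 * c * (p-1)) * ∫ y : ℝ, y ^ 2 * (1 + c * y ^ 2) ^ (-p) := by
    simp only [hF']
    rw [integral_sub hI1 (hM.const_mul _), integral_const_mul]
  rw [hsplit] at hibp
  rw [hsum] at hibp
  linarith [hibp]

lemma key_exp {b : ℝ} (hb : 0 < b) :
    (∫ x : ℝ, Real.exp (-b * x ^ 2)) = (2*b) * ∫ x : ℝ, x ^ 2 * Real.exp (-b * x ^ 2) := by
  have hI : Integrable fun x : ℝ => Real.exp (-b*x^2) := integrable_exp_neg_mul_sq hb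
  have hM : Integrable fun x : ℝ => x ^ 2 * Real.exp (-b*x^2) := by
    have h := integrable_rpow_mul_exp_neg_mul_sq hb (s := 2) (by norm_num)
    have e : (fun x : ℝ => x ^ (2:ℝ) * Real.exp (-b*x^2)) = fun x : ℝ => x ^ 2 * Real.exp (-b*x^2) := by
      funext x
      rw [show (2:ℝ) = ((2:ℕ):ℝ) by norm_num, Real.rpow_natCast]
    rwa [e] at h
  set F := fun x : ℝ => x * Real.exp (-b*x^2) with hFdef
  have hF : Integrable F := integrable_mul_exp_neg_mul_sq hb
  set F' := fun x : ℝ => Real.exp (-b*x^2) - (2*b) * (x^2 * Real.exp (-b*x^2)) with hF'def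
  have hderiv : ∀ x, HasDerivAt F (F' x) x := by
    intro x
    have h1 : HasDerivAt (fun x : ℝ => -b * x^2) (-b * (2*x)) x := by
      simpa using (hasDerivAt_pow 2 x).const_mul (-b)
    have h3 : HasDerivAt (fun x : ℝ => x * Real.exp (-b*x^2)) _ x := (hasDerivAt_id x).fun_mul h1.exp
    convert h3 using 1
    simp only [hF'def, id_eq]
    ring
  have hint : Integrable F' := hI.sub (hM.const_mul _)
  have h0 := integral_eq_zero_of_hasDerivAt_of_integrable hderiv hint hF
  have hsplit : (∫ x : ℝ, F' x)
      = (∫ x : ℝ, Real.exp (-b*x^2)) - (2*b) * ∫ x : ℝ, x^2 * Real.exp (-b*x^2) := by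
    simp only [hF'def]
    rw [integral_sub hI (hM.const_mul _), integral_const_mul]
  rw [hsplit] at h0
  linarith

theorem qGauss_second_moment (q : ℝ) (hq1 : 1 ≤ q) (hq : q < 5 / 3) :
    (∫ y : ℝ, y ^ 2 * qGauss q 0 1 y) = (3 - q) / (5 - 3 * q) := by
  rcases eq_or_lt_of_le hq1 with h1 | h1
  · subst h1
    have hC : Cq 1 = Real.sqrt π := by
      unfold Cq qExp
      simp only [if_true]
      have e : (fun x : ℝ => Real.exp (-(x ^ 2))) = fun x : ℝ => Real.exp (-1 * x ^ 2) := by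
        funext x; ring_nf
      rw [e, integral_gaussian]
      norm_num
    have hg : ∀ y : ℝ, y ^ 2 * qGauss 1 0 1 y
        = Real.sqrt (1/2) / Real.sqrt π * (y ^ 2 * Real.exp (-(1/2) * y ^ 2)) := by
      intro y
      unfold qGauss qExp
      rw [if_pos rfl, hC]
      norm_num
      ring_nf
    rw [integral_congr_ae (Eventually.of_forall hg), integral_const_mul]
    have hkey := key_exp (b := 1/2) (by norm_num)
    rw [integral_gaussian, show (π/(1/2) : ℝ) = 2*π by ring] at hkey
    have h2 : (∫ x : ℝ, x ^ 2 * Real.exp (-(1/2) * x ^ 2)) = Real.sqrt (2*π) := by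
      linarith [hkey]
    rw [h2]
    rw [div_mul_eq_mul_div, ← Real.sqrt_mul (by norm_num : (0:ℝ) ≤ 1/2)]
    rw [show (1/2 : ℝ) * (2*π) = π by ring]
    rw [div_self (by positivity : Real.sqrt π ≠ 0)]
    norm_num
  ·
    have hq1' : 0 < q - 1 := by linarith
    have h3q : 0 < 3 - q := by linarith
    have h53 : 0 < 5 - 3*q := by linarith
    set p : ℝ := 1 / (q - 1) with hpdef
    set c : ℝ := (q - 1) / (3 - q) with hcdef
    have hc : 0 < c := by positivity
    have hp : 3/2 < p := by
      rw [hpdef, lt_div_iff₀ hq1']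
      linarith
    have hexp : (1:ℝ) / (1 - q) = -p := by
      rw [hpdef, show (1 - q) = -(q-1) by ring, div_neg]
    -- qExp evaluated on the relevant arguments
    have hqe : ∀ a y : ℝ, 0 < a → qExp q (-(a * y ^ 2)) = (1 + (a * (q-1)) * y ^ 2) ^ (-p) := by
      intro a y ha
      unfold qExp
      rw [if_neg (by linarith : q ≠ 1), hexp]
      congr 1
      rw [max_eq_right (by nlinarith [mul_nonneg hq1'.le (mul_nonneg ha.le (sq_nonneg y))] : (0:ℝ) ≤ 1 + (1 - q) * -(a * y ^ 2))]
      ring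
    -- Cq as an integral of the power function
    set β : ℝ := 1 / (3 - q) with hbdef
    have hβ : 0 < β := by positivity
    have hsβ : 0 < Real.sqrt β := Real.sqrt_pos.2 hβ
    set Ip : ℝ := ∫ y : ℝ, (1 + c * y ^ 2) ^ (-p) with hIpdef
    have hCq : Cq q = Real.sqrt β * Ip := by
      have hC1 : Cq q = ∫ x : ℝ, (1 + (q-1) * x ^ 2) ^ (-p) := by
        unfold Cq
        apply integral_congr_ae (Eventually.of_forall fun x => ?_)
        have := hqe 1 x one_pos
        simpa using this
      have hsub := Measure.integral_comp_mul_left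
        (fun x : ℝ => (1 + (q-1) * x ^ 2) ^ (-p)) (Real.sqrt β)
      have e : (fun y : ℝ => (1 + (q-1) * (Real.sqrt β * y) ^ 2) ^ (-p))
          = fun y : ℝ => (1 + c * y ^ 2) ^ (-p) := by
        funext y
        congr 2
        rw [mul_pow, Real.sq_sqrt hβ.le, hcdef, hbdef]
        ring
      rw [e] at hsub
      rw [hC1, hIpdef, hsub, smul_eq_mul,
        abs_of_pos (by positivity : (0:ℝ) < (Real.sqrt β)⁻¹), ← mul_assoc,
        mul_inv_cancel₀ hsβ.ne', one_mul]
    have hIppos : 0 < Ip := by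
      rw [hIpdef]
      refine (integral_pos_iff_support_of_nonneg
        (fun y => Real.rpow_nonneg (by positivity) _)
        (integrable_aux hc (by linarith))).2 ?_
      have hsupp : Function.support (fun y : ℝ => (1 + c * y ^ 2) ^ (-p)) = Set.univ := by
        ext y
        simp only [Function.mem_support, Set.mem_univ, iff_true]
        exact (Real.rpow_pos_of_pos (by positivity) _).ne'
      rw [hsupp]
      simp
    have hgy : ∀ y : ℝ, y ^ 2 * qGauss q 0 1 y
        = (Real.sqrt β / Cq q) * (y ^ 2 * (1 + c * y ^ 2) ^ (-p)) := by
      intro y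
      unfold qGauss
      simp only [sub_zero, one_pow, div_one, one_mul]
      rw [← hbdef]
      rw [hqe β y hβ]
      rw [show β * (q - 1) = c by rw [hbdef, hcdef]; ring]
      ring
    rw [integral_congr_ae (Eventually.of_forall hgy), integral_const_mul]
    have hkey := key_poly hc hp
    rw [← hIpdef] at hkey
    have h2p3 : 0 < 2 * p - 3 := by linarith
    have hMval : (∫ y : ℝ, y ^ 2 * (1 + c * y ^ 2) ^ (-p)) = Ip / (c * (2 * p - 3)) := by
      rw [eq_div_iff (by positivity)]
      linarith
    rw [hMval, hCq]
    have hfin : Real.sqrt β / (Real.sqrt β * Ip) * (Ip / (c * (2 * p - 3)))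
        = 1 / (c * (2 * p - 3)) := by
      rw [div_mul_div_comm, mul_comm (Real.sqrt β) Ip, ← mul_assoc]
      rw [mul_assoc (Ip * Real.sqrt β), div_mul_eq_div_div,
        div_self (mul_pos hIppos hsβ).ne']
    rw [hfin]
    rw [hcdef, hpdef]
    rw [div_eq_div_iff (by positivity) h53.ne']
    field_simp
    ring
end

section
/- The normalization constants satisfy the ratio identity C_{q₁}/C_q = 2(2-q)^{3/2}/(5-3q), where q₁ = 1/(2-q) and 1 ≤ q < 5/3. -/
open MeasureTheory

open Real Filter Set Topology

noncomputable def Jint (s : ℝ) : ℝ := ∫ x : ℝ, ((1:ℝ) + x ^ 2) ^ (-s)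

lemma integrable_Jint {s : ℝ} (hs : 1/2 < s) :
    Integrable fun x : ℝ => ((1:ℝ) + x ^ 2) ^ (-s) := by
  have h2s : (Module.finrank ℝ ℝ : ℝ) < 2 * s := by
    simp only [Module.finrank_self, Nat.cast_one]; linarith
  have h := integrable_rpow_neg_one_add_norm_sq (E := ℝ) (μ := volume) h2s
  have e : ∀ x : ℝ, ((1:ℝ) + ‖x‖ ^ 2) ^ (-(2*s) / 2) = ((1:ℝ) + x ^ 2) ^ (-s) := by
    intro x
    rw [Real.norm_eq_abs, sq_abs]
    ring_nf
  simpa only [e] using h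

lemma Jint_pos {s : ℝ} (hs : 1/2 < s) : 0 < Jint s := by
  rw [Jint]
  refine (integral_pos_iff_support_of_nonneg (fun x => by positivity)
    (integrable_Jint hs)).2 ?_
  have : (Function.support fun x : ℝ => ((1:ℝ) + x ^ 2) ^ (-s)) = Set.univ := by
    ext x; simp only [Function.mem_support, Set.mem_univ, iff_true]
    positivity
  rw [this]
  simp

lemma Jint_scale {b : ℝ} (hb : 0 < b) (s : ℝ) :
    ∫ x : ℝ, ((1:ℝ) + b * x ^ 2) ^ (-s) = (Real.sqrt b)⁻¹ * Jint s := by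
  have e : ∀ x : ℝ, ((1:ℝ) + (Real.sqrt b * x) ^ 2) = 1 + b * x ^ 2 := by
    intro x; rw [mul_pow, Real.sq_sqrt hb.le]
  calc ∫ x : ℝ, ((1:ℝ) + b * x ^ 2) ^ (-s)
      = ∫ x : ℝ, ((1:ℝ) + (Real.sqrt b * x) ^ 2) ^ (-s) := by simp_rw [e]
    _ = |(Real.sqrt b)⁻¹| • ∫ y : ℝ, ((1:ℝ) + y ^ 2) ^ (-s) :=
        MeasureTheory.Measure.integral_comp_mul_left (fun y => ((1:ℝ) + y ^ 2) ^ (-s)) _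
    _ = (Real.sqrt b)⁻¹ * Jint s := by
        rw [abs_of_nonneg (by positivity), smul_eq_mul, Jint]

lemma Jint_rec {s : ℝ} (hs : 1/2 < s) :
    (2*s - 1) * Jint s = 2*s * Jint (s+1) := by
  set f : ℝ → ℝ := fun x => x * ((1:ℝ) + x ^ 2) ^ (-s) with hf
  set f' : ℝ → ℝ := fun x =>
    (1 - 2*s) * ((1:ℝ) + x ^ 2) ^ (-s) + (2*s) * ((1:ℝ) + x ^ 2) ^ (-(s+1)) with hf'
  have hpos : ∀ x : ℝ, (0:ℝ) < 1 + x ^ 2 := fun x => by positivity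
  have hderiv : ∀ x : ℝ, HasDerivAt f (f' x) x := by
    intro x
    have h1 : HasDerivAt (fun x : ℝ => (1:ℝ) + x ^ 2) (2*x) x := by
      simpa using ((hasDerivAt_pow 2 x).const_add 1)
    have h2 : HasDerivAt (fun x : ℝ => ((1:ℝ) + x ^ 2) ^ (-s))
        (2 * x * (-s) * ((1:ℝ) + x ^ 2) ^ (-s - 1)) x :=
      h1.rpow_const (Or.inl (hpos x).ne')
    have h3 := (hasDerivAt_id x).mul h2
    refine HasDerivAt.congr_deriv h3 (Eq.symm ?_)
    have key : ((1:ℝ) + x ^ 2) ^ (-s - 1) * (1 + x ^ 2) = ((1:ℝ) + x ^ 2) ^ (-s) := by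
      rw [← Real.rpow_add_one (hpos x).ne' (-s - 1)]
      ring_nf
    have hb : ((1:ℝ) + x ^ 2) ^ (-(s+1)) = ((1:ℝ) + x ^ 2) ^ (-s - 1) := by ring_nf
    simp only [hf', hb, id_eq]
    linear_combination (2*s) * key
  have hint1 := integrable_Jint hs
  have hint2 := integrable_Jint (by linarith : 1/2 < s + 1)
  have hintf' : Integrable f' := by
    exact (hint1.const_mul _).add (hint2.const_mul _)
  have htop : Tendsto f atTop (𝓝 0) := by
    apply squeeze_zero_norm' (a := fun x : ℝ => x ^ (1 - 2*s))
    · filter_upwards [eventually_ge_atTop (1:ℝ)] with x hx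
      have hx0 : (0:ℝ) < x := by linarith
      have h1 : ((1:ℝ) + x ^ 2) ^ (-s) ≤ (x ^ 2) ^ (-s) :=
        Real.rpow_le_rpow_of_nonpos (by positivity) (by linarith) (by linarith)
      have h2 : (x ^ 2 : ℝ) ^ (-s) = x ^ (-(2*s)) := by
        rw [← Real.rpow_natCast x 2, ← Real.rpow_mul hx0.le]
        norm_num
      have h3 : x * x ^ (-(2*s)) = x ^ (1 - 2*s) := by
        rw [show (1 - 2*s : ℝ) = 1 + (-(2*s)) by ring, Real.rpow_add hx0, Real.rpow_one]
      calc ‖f x‖ = x * ((1:ℝ) + x ^ 2) ^ (-s) := by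
            rw [hf, Real.norm_eq_abs, abs_of_nonneg (by positivity)]
        _ ≤ x * (x ^ 2) ^ (-s) := by
            exact mul_le_mul_of_nonneg_left h1 hx0.le
        _ = x ^ (1 - 2*s) := by rw [h2, h3]
    · have := tendsto_rpow_neg_atTop (show (0:ℝ) < 2*s - 1 by linarith)
      simpa [show ∀ y : ℝ, -(2*s-1) = 1 - 2*s from fun y => by ring] using this
  have hbot : Tendsto f atBot (𝓝 0) := by
    have h := htop.comp tendsto_neg_atBot_atTop
    have e : (fun x : ℝ => f (-x)) = fun x => - f x := by
      funext x; simp only [hf]; ring_nf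
    rw [Function.comp_def] at h
    rw [e] at h
    simpa using h.neg
  have h0 := integral_of_hasDerivAt_of_tendsto hderiv hintf' hbot htop
  simp only [sub_zero] at h0
  rw [hf', integral_add (hint1.const_mul _) (hint2.const_mul _),
    integral_const_mul, integral_const_mul] at h0
  have hJ1 : Jint s = ∫ x : ℝ, ((1:ℝ) + x ^ 2) ^ (-s) := rfl
  have hJ2 : Jint (s+1) = ∫ x : ℝ, ((1:ℝ) + x ^ 2) ^ (-(s+1)) := rfl
  rw [← hJ1, ← hJ2] at h0
  linarith

lemma Cq_eval {p : ℝ} (hp : 1 < p) :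
    Cq p = (Real.sqrt (p - 1))⁻¹ * Jint (1/(p-1)) := by
  have hp0 : (0:ℝ) < p - 1 := by linarith
  have he : ∀ x : ℝ, qExp p (-(x ^ 2)) = ((1:ℝ) + (p-1) * x ^ 2) ^ (-(1/(p-1))) := by
    intro x
    rw [qExp, if_neg (by linarith : p ≠ 1)]
    have h1 : (1 : ℝ) + (1 - p) * (-(x ^ 2)) = 1 + (p-1) * x ^ 2 := by ring
    rw [h1, max_eq_right (by positivity)]
    congr 1
    rw [show (1:ℝ) - p = -(p-1) by ring, one_div, inv_neg, ← one_div]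
  rw [Cq]
  simp_rw [he]
  exact Jint_scale hp0 _

theorem Cq_ratio (q : ℝ) (hq1 : 1 ≤ q) (hq : q < 5 / 3) :
    Cq (1 / (2 - q)) / Cq q = 2 * (2 - q) ^ ((3 : ℝ) / 2) / (5 - 3 * q) := by
  rcases eq_or_lt_of_le hq1 with h1 | h1
  · -- q = 1
    subst h1
    norm_num
    have hC : Cq 1 ≠ 0 := by
      have : Cq 1 = Real.sqrt (π / 1) := by
        rw [Cq]
        have : ∀ x : ℝ, qExp 1 (-(x ^ 2)) = Real.exp (-1 * x ^ 2) := by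
          intro x; rw [qExp, if_pos rfl]; ring_nf
        simp_rw [this]
        exact integral_gaussian 1
      rw [this]
      positivity
    exact hC
  · -- 1 < q
    have h2q : (0:ℝ) < 2 - q := by linarith
    have ha : (0:ℝ) < q - 1 := by linarith
    have h53 : (0:ℝ) < 5 - 3*q := by linarith
    have hp : 1 < 1 / (2 - q) := by
      rw [lt_div_iff₀ h2q]; linarith
    have hp1 : (1:ℝ) / (2 - q) - 1 = (q - 1) / (2 - q) := by
      field_simp
      ring
    have hs1 : 1 / ((q - 1)/(2 - q)) = 1/(q-1) - 1 := by
      rw [one_div_div]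
      field_simp
      ring
    have hs12 : (1:ℝ)/2 < 1/(q-1) - 1 := by
      rw [lt_sub_iff_add_lt, div_add' _ _ _ (by norm_num : (2:ℝ) ≠ 0),
        div_lt_div_iff₀ (by norm_num) ha]
      linarith
    have hs32 : (1:ℝ)/2 < 1/(q-1) := by linarith
    have hA : 0 < Jint (1/(q-1)) := Jint_pos hs32
    have hB : 0 < Jint (1/(q-1) - 1) := Jint_pos hs12
    have hrec := Jint_rec hs12
    rw [sub_add_cancel] at hrec
    have e1 : (2*((1:ℝ)/(q-1)-1) - 1) = (5 - 3*q)/(q-1) := by field_simp; ring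
    have e2 : (2*((1:ℝ)/(q-1)-1)) = 2*(2-q)/(q-1) := by field_simp; ring
    rw [e1, e2, div_mul_eq_mul_div, div_mul_eq_mul_div,
      div_eq_div_iff ha.ne' ha.ne'] at hrec
    have hrec' := mul_right_cancel₀ ha.ne' hrec
    obtain ⟨A, hAdef⟩ : ∃ A, Jint (1/(q-1)) = A := ⟨_, rfl⟩
    obtain ⟨B, hBdef⟩ : ∃ B, Jint (1/(q-1) - 1) = B := ⟨_, rfl⟩
    rw [hAdef] at hrec' hA
    rw [hBdef] at hrec' hB
    -- hrec' : (5 - 3*q) * B = 2*(2-q) * A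
    have hCq : Cq q = (Real.sqrt (q - 1))⁻¹ * A := by rw [Cq_eval h1, hAdef]
    have hCp : Cq (1/(2-q)) = (Real.sqrt (2 - q) / Real.sqrt (q - 1)) * B := by
      rw [Cq_eval hp, hp1, hs1, hBdef, Real.sqrt_div ha.le, inv_div]
    have hrpow : (2 - q) ^ ((3:ℝ)/2) = (2 - q) * Real.sqrt (2 - q) := by
      rw [show (3:ℝ)/2 = 1 + 1/2 by norm_num, Real.rpow_add h2q, Real.rpow_one,
        ← Real.sqrt_eq_rpow]
    rw [hCq, hCp, hrpow]
    have hsq1 : (0:ℝ) < Real.sqrt (q - 1) := Real.sqrt_pos.2 ha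
    have hsq2 : (0:ℝ) < Real.sqrt (2 - q) := Real.sqrt_pos.2 h2q
    field_simp
    rw [eq_div_iff (by linarith)]; linear_combination hrec'
end

section
/- If X follows the q-Gaussian N_q(m, σ²) with density f and 1 ≤ q < 3, then the escort distribution f_q(x) = f(x)^q / ∫ f(t)^q dt is the density of a q₃-Gaussian N_{q₃}(m, σ₃²) with q₃ = (2q-1)/q and σ₃² = ((3-q)/(q+1))σ². Consequently, the normalized q-mean ∫ x f_q(x) dx equals m. -/
open MeasureTheory

lemma qExp_nonneg (q x : ℝ) : 0 ≤ qExp q x := by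
  unfold qExp; split
  · exact (Real.exp_pos x).le
  · exact Real.rpow_nonneg (le_max_left _ _) _

lemma qExp_neg_of_gt {q : ℝ} (hq : 1 < q) {y : ℝ} (hy : 0 ≤ y) :
    qExp q (-y) = (1 + (q - 1) * y) ^ (1 / (1 - q)) := by
  have h : 1 + (1 - q) * (-y) = 1 + (q - 1) * y := by ring
  rw [qExp, if_neg hq.ne', h, max_eq_right (by nlinarith)]

lemma qExp_pos {q : ℝ} (hq : 1 ≤ q) {y : ℝ} (hy : 0 ≤ y) : 0 < qExp q (-y) := by
  rcases eq_or_lt_of_le hq with h | h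
  · rw [qExp, if_pos h.symm]; exact Real.exp_pos _
  · rw [qExp_neg_of_gt h hy]
    exact Real.rpow_pos_of_pos (by nlinarith) _

lemma qExp_rpow {q : ℝ} (hq1 : 1 ≤ q) {y : ℝ} (hy : 0 ≤ y) :
    (qExp q (-y)) ^ q = qExp ((2 * q - 1) / q) (-(q * y)) := by
  rcases eq_or_lt_of_le hq1 with h | h
  · rw [← h]; norm_num
  · have hq0 : q ≠ 0 := by positivity
    have hbase : (0:ℝ) ≤ 1 + (q - 1) * y := by nlinarith
    have hq3ne : (2 * q - 1) / q ≠ 1 := by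
      rw [Ne, div_eq_one_iff_eq hq0]
      intro hE; exact h.ne' (by linarith)
    have h1 : 1 + (1 - (2 * q - 1) / q) * (-(q * y)) = 1 + (q - 1) * y := by
      field_simp; ring
    have hne : 1 - q ≠ 0 := by intro hE; exact h.ne' (by linarith)
    have h2 : 1 / (1 - q) * q = 1 / (1 - (2 * q - 1) / q) := by
      rw [show 1 - (2 * q - 1) / q = (1 - q) / q by field_simp; ring, one_div_div]
      ring
    rw [qExp_neg_of_gt h hy, ← Real.rpow_mul hbase, qExp, if_neg hq3ne, h1,
      max_eq_right hbase, h2]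

lemma integrable_qExp_sq {q : ℝ} (hq1 : 1 ≤ q) (hq3 : q < 3) :
    Integrable (fun x : ℝ => qExp q (-(x ^ 2))) := by
  rcases eq_or_lt_of_le hq1 with h | h
  · have := integrable_exp_neg_mul_sq (b := 1) one_pos
    simpa [qExp, ← h] using this
  · set p : ℝ := 1 / (q - 1) with hp
    have hq1' : 0 < q - 1 := by linarith
    have hpp : 0 < p := by positivity
    have hp1 : 1 < 2 * p := by
      rw [show 2 * p = 2 / (q - 1) by rw [hp]; ring, lt_div_iff₀ hq1']
      linarith
    set c : ℝ := min 1 (q - 1) / 2 with hc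
    have hc0 : 0 < c := by
      rw [hc]; positivity
    have hcont : Continuous fun x : ℝ => qExp q (-(x ^ 2)) := by
      have : ∀ x : ℝ, qExp q (-(x ^ 2)) = (max 0 (1 + (1 - q) * (-(x ^ 2)))) ^ (1 / (1 - q)) := by
        intro x; rw [qExp, if_neg h.ne']
      rw [funext this]
      refine Continuous.rpow_const (continuous_const.max (by continuity)) (fun x => Or.inl ?_)
      have : 1 + (1 - q) * (-(x ^ 2)) = 1 + (q - 1) * x ^ 2 := by ring
      rw [this]
      positivity
    refine Integrable.mono'
      ((integrable_one_add_norm (E := ℝ) (r := 2 * p) (by simpa using hp1)).const_mul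
        (c ^ (-p))) hcont.aestronglyMeasurable (Filter.Eventually.of_forall fun x => ?_)
    have hsq : (0:ℝ) ≤ x ^ 2 := sq_nonneg x
    have hb1 : (0:ℝ) < 1 + (q - 1) * x ^ 2 := by nlinarith
    have hax : (0:ℝ) < 1 + |x| := by positivity
    have key : c * (1 + |x|) ^ 2 ≤ 1 + (q - 1) * x ^ 2 := by
      have h1 : c ≤ 1 / 2 := by rw [hc]; simp [div_le_div_of_nonneg_right, min_le_left]; linarith [min_le_left (1:ℝ) (q-1)]
      have h2 : c ≤ (q - 1) / 2 := by rw [hc]; linarith [min_le_right (1:ℝ) (q-1)]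
      have h3 : (1 + |x|) ^ 2 = 1 + 2 * |x| + |x| ^ 2 := by ring
      have h4 : |x| ^ 2 = x ^ 2 := sq_abs x
      nlinarith [abs_nonneg x, sq_nonneg (1 - |x|)]
    have hval : qExp q (-(x ^ 2)) = (1 + (q - 1) * x ^ 2) ^ (-p) := by
      rw [qExp_neg_of_gt h hsq]
      rw [hp, show (1:ℝ) - q = -(q - 1) by ring, div_neg]
    rw [Real.norm_eq_abs, abs_of_nonneg (qExp_nonneg _ _), hval]
    calc (1 + (q - 1) * x ^ 2) ^ (-p)
        ≤ (c * (1 + |x|) ^ 2) ^ (-p) :=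
          Real.rpow_le_rpow_of_nonpos (by positivity) key (by linarith)
      _ = c ^ (-p) * (1 + ‖x‖) ^ (-(2 * p)) := by
          rw [Real.mul_rpow hc0.le (by positivity), ← Real.rpow_natCast (1 + |x|) 2,
            ← Real.rpow_mul hax.le, Real.norm_eq_abs]
          congr 1
          push_cast; ring

lemma integrable_mul_qExp_sq {q : ℝ} (hq1 : 1 ≤ q) (hq2 : q < 2) :
    Integrable (fun x : ℝ => x * qExp q (-(x ^ 2))) := by
  rcases eq_or_lt_of_le hq1 with h | h
  · have := integrable_rpow_mul_exp_neg_mul_sq (b := 1) one_pos (s := 1) (by norm_num)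
    simpa [qExp, ← h, Real.rpow_one] using this
  · set p : ℝ := 1 / (q - 1) with hp
    have hq1' : 0 < q - 1 := by linarith
    have hpp : 0 < p := by positivity
    have hp1 : 1 < p := by
      rw [hp, lt_div_iff₀ hq1']; linarith
    set c : ℝ := min 1 (q - 1) / 2 with hc
    have hc0 : 0 < c := by rw [hc]; positivity
    have hcont : Continuous fun x : ℝ => x * qExp q (-(x ^ 2)) := by
      refine continuous_id.mul ?_
      have : ∀ x : ℝ, qExp q (-(x ^ 2)) = (max 0 (1 + (1 - q) * (-(x ^ 2)))) ^ (1 / (1 - q)) := by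
        intro x; rw [qExp, if_neg h.ne']
      rw [funext this]
      refine Continuous.rpow_const (continuous_const.max (by continuity)) (fun x => Or.inl ?_)
      have : 1 + (1 - q) * (-(x ^ 2)) = 1 + (q - 1) * x ^ 2 := by ring
      rw [this]; positivity
    refine Integrable.mono'
      ((integrable_one_add_norm (E := ℝ) (r := 2 * p - 1) (by simp; linarith)).const_mul
        (c ^ (-p))) hcont.aestronglyMeasurable (Filter.Eventually.of_forall fun x => ?_)
    have hsq : (0:ℝ) ≤ x ^ 2 := sq_nonneg x
    have hb1 : (0:ℝ) < 1 + (q - 1) * x ^ 2 := by nlinarith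
    have hax : (0:ℝ) < 1 + |x| := by positivity
    have key : c * (1 + |x|) ^ 2 ≤ 1 + (q - 1) * x ^ 2 := by
      have h1 : c ≤ 1 / 2 := by rw [hc]; linarith [min_le_left (1:ℝ) (q-1)]
      have h2 : c ≤ (q - 1) / 2 := by rw [hc]; linarith [min_le_right (1:ℝ) (q-1)]
      have h4 : |x| ^ 2 = x ^ 2 := sq_abs x
      nlinarith [abs_nonneg x, sq_nonneg (1 - |x|)]
    have hval : qExp q (-(x ^ 2)) = (1 + (q - 1) * x ^ 2) ^ (-p) := by
      rw [qExp_neg_of_gt h hsq]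
      rw [hp, show (1:ℝ) - q = -(q - 1) by ring, div_neg]
    rw [Real.norm_eq_abs, abs_mul, abs_of_nonneg (qExp_nonneg _ _), hval]
    calc |x| * (1 + (q - 1) * x ^ 2) ^ (-p)
        ≤ (1 + |x|) * (c * (1 + |x|) ^ 2) ^ (-p) := by
          refine mul_le_mul (by linarith [abs_nonneg x])
            (Real.rpow_le_rpow_of_nonpos (by positivity) key (by linarith))
            (Real.rpow_nonneg (by nlinarith) _) (by positivity)
      _ = c ^ (-p) * (1 + ‖x‖) ^ (-(2 * p - 1)) := by
          rw [Real.mul_rpow hc0.le (by positivity), ← Real.rpow_natCast (1 + |x|) 2,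
            ← Real.rpow_mul hax.le, Real.norm_eq_abs]
          rw [show (1 + |x|) * (c ^ (-p) * (1 + |x|) ^ (((2:ℕ):ℝ) * -p))
              = c ^ (-p) * ((1 + |x|) ^ (1:ℝ) * (1 + |x|) ^ (((2:ℕ):ℝ) * -p)) by
            rw [Real.rpow_one]; ring]
          rw [← Real.rpow_add hax]
          congr 1
          push_cast; ring

lemma Cq_pos {q : ℝ} (hq1 : 1 ≤ q) (hq3 : q < 3) : 0 < Cq q := by
  rw [Cq, integral_pos_iff_support_of_nonneg (fun x => qExp_nonneg _ _)
    (integrable_qExp_sq hq1 hq3)]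
  have : Function.support (fun x : ℝ => qExp q (-(x ^ 2))) = Set.univ := by
    refine Set.eq_univ_iff_forall.mpr fun x => ?_
    exact (qExp_pos hq1 (sq_nonneg x)).ne'
  rw [this]
  simp [Real.volume_univ]


set_option maxHeartbeats 1000000 in
theorem qGauss_escort (q m σ : ℝ) (hq1 : 1 ≤ q) (hq3 : q < 3) (hσ : 0 < σ) :
    (∀ x : ℝ, (qGauss q m σ x) ^ q / (∫ t : ℝ, (qGauss q m σ t) ^ q) =
      qGauss ((2 * q - 1) / q) m (Real.sqrt ((3 - q) / (q + 1)) * σ) x) ∧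
    (∫ x : ℝ, x * ((qGauss q m σ x) ^ q / (∫ t : ℝ, (qGauss q m σ t) ^ q))) = m := by
  have hq0 : (0:ℝ) < q := lt_of_lt_of_le one_pos hq1
  have h3q : (0:ℝ) < 3 - q := by linarith
  have hq1p : (0:ℝ) < q + 1 := by linarith
  set q3 : ℝ := (2 * q - 1) / q with hq3def
  have hq31 : 1 ≤ q3 := by rw [hq3def, le_div_iff₀ hq0]; linarith
  have hq32 : q3 < 2 := by rw [hq3def, div_lt_iff₀ hq0]; linarith
  have hq33 : q3 < 3 := by linarith
  set σ3 : ℝ := Real.sqrt ((3 - q) / (q + 1)) * σ with hσ3def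
  have hσ3 : 0 < σ3 := mul_pos (Real.sqrt_pos.mpr (div_pos h3q hq1p)) hσ
  set b : ℝ := q / ((3 - q) * σ ^ 2) with hbdef
  have hb : 0 < b := by rw [hbdef]; positivity
  set sb : ℝ := Real.sqrt b with hsbdef
  have hsb : 0 < sb := Real.sqrt_pos.mpr hb
  have hsb2 : sb ^ 2 = b := Real.sq_sqrt hb.le
  have hCq : 0 < Cq q := Cq_pos hq1 hq3
  have hCq3 : 0 < Cq q3 := Cq_pos hq31 hq33
  have hA : 0 < Real.sqrt (1 / (3 - q)) / (σ * Cq q) := by positivity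
  set A : ℝ := Real.sqrt (1 / (3 - q)) / (σ * Cq q) with hAdef
  have hAq : 0 < A ^ q := Real.rpow_pos_of_pos hA q
  have hpow : ∀ x : ℝ, qGauss q m σ x ^ q = A ^ q * qExp q3 (-(b * (x - m) ^ 2)) := by
    intro x
    have harg : (1 / (3 - q)) * (x - m) ^ 2 / σ ^ 2 = (b / q) * (x - m) ^ 2 := by
      rw [hbdef]; field_simp
    have hy : 0 ≤ (b / q) * (x - m) ^ 2 := by positivity
    rw [qGauss, harg, ← hAdef, Real.mul_rpow hA.le (qExp_nonneg _ _),
      qExp_rpow hq1 hy, ← hq3def]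
    congr 2
    rw [hbdef]; field_simp
  have hEint : (∫ u : ℝ, qExp q3 (-(b * u ^ 2))) = sb⁻¹ * Cq q3 := by
    have h1 : ∀ u : ℝ, qExp q3 (-(b * u ^ 2)) = (fun v : ℝ => qExp q3 (-(v ^ 2))) (sb • u) := by
      intro u
      simp only [smul_eq_mul]
      rw [show ((sb * u : ℝ) ^ 2) = b * u ^ 2 by rw [mul_pow, hsb2]]
    rw [funext h1, Measure.integral_comp_smul volume (fun v : ℝ => qExp q3 (-(v ^ 2))) sb,
      Module.finrank_self, pow_one, abs_of_nonneg (inv_nonneg.mpr hsb.le), smul_eq_mul, ← Cq]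
  have hν : (∫ t : ℝ, qGauss q m σ t ^ q) = A ^ q * (sb⁻¹ * Cq q3) := by
    simp only [hpow]
    rw [integral_const_mul]
    rw [integral_sub_right_eq_self (fun u : ℝ => qExp q3 (-(b * u ^ 2))) m, hEint]
  have hRHS : ∀ x : ℝ, qGauss q3 m σ3 x = sb / Cq q3 * qExp q3 (-(b * (x - m) ^ 2)) := by
    intro x
    have h3q3 : 3 - q3 = (q + 1) / q := by rw [hq3def]; field_simp; ring
    have hσ3sq : σ3 ^ 2 = (3 - q) / (q + 1) * σ ^ 2 := by
      rw [hσ3def, mul_pow, Real.sq_sqrt (le_of_lt (div_pos h3q hq1p))]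
    have harg : 1 / (3 - q3) * (x - m) ^ 2 / σ3 ^ 2 = b * (x - m) ^ 2 := by
      rw [h3q3, hσ3sq, hbdef, one_div_div]
      field_simp
    have hcoef : Real.sqrt (1 / (3 - q3)) = sb * σ3 := by
      have hsq : (sb * σ3) ^ 2 = 1 / (3 - q3) := by
        rw [mul_pow, hsb2, hσ3sq, h3q3, hbdef, one_div_div]
        field_simp
      rw [← hsq, Real.sqrt_sq (mul_pos hsb hσ3).le]
    rw [qGauss, harg, hcoef,
      show sb * σ3 / (σ3 * Cq q3) = sb / Cq q3 by
        field_simp [hσ3.ne']]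
  have part1 : ∀ x : ℝ, qGauss q m σ x ^ q / (∫ t : ℝ, qGauss q m σ t ^ q)
      = qGauss q3 m σ3 x := by
    intro x
    rw [hpow x, hν, hRHS x]
    field_simp
  refine ⟨part1, ?_⟩
  have hint : ∀ x : ℝ, x * (qGauss q m σ x ^ q / ∫ t : ℝ, qGauss q m σ t ^ q)
      = sb / Cq q3 * (x * qExp q3 (-(b * (x - m) ^ 2))) := by
    intro x
    rw [part1 x, hRHS x]
    ring
  simp_rw [hint]
  rw [integral_const_mul]
  have hshift : (∫ x : ℝ, x * qExp q3 (-(b * (x - m) ^ 2)))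
      = ∫ u : ℝ, (u + m) * qExp q3 (-(b * u ^ 2)) := by
    rw [← integral_sub_right_eq_self (fun u : ℝ => (u + m) * qExp q3 (-(b * u ^ 2))) m]
    congr 1
    funext x
    simp [sub_add_cancel]
  rw [hshift]
  have hIE : Integrable (fun u : ℝ => qExp q3 (-(b * u ^ 2))) := by
    have h1 := (integrable_qExp_sq hq31 hq33).comp_mul_left' (R := sb) hsb.ne'
    refine h1.congr (Filter.Eventually.of_forall fun u => ?_)
    show qExp q3 (-((sb * u) ^ 2)) = _
    rw [show ((sb * u : ℝ) ^ 2) = b * u ^ 2 by rw [mul_pow, hsb2]]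
  have hI1 : Integrable (fun u : ℝ => u * qExp q3 (-(b * u ^ 2))) := by
    have h1 := (integrable_mul_qExp_sq hq31 hq32).comp_mul_left' (R := sb) hsb.ne'
    have h2 := h1.const_mul sb⁻¹
    refine h2.congr (Filter.Eventually.of_forall fun u => ?_)
    show sb⁻¹ * (sb * u * qExp q3 (-((sb * u) ^ 2))) = _
    rw [show ((sb * u) ^ 2 : ℝ) = b * u ^ 2 by rw [mul_pow, hsb2], ← mul_assoc, ← mul_assoc,
      inv_mul_cancel₀ hsb.ne', one_mul]
  have hsplit : (∫ u : ℝ, (u + m) * qExp q3 (-(b * u ^ 2)))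
      = (∫ u : ℝ, u * qExp q3 (-(b * u ^ 2))) + ∫ u : ℝ, m * qExp q3 (-(b * u ^ 2)) := by
    rw [← integral_add hI1 (hIE.const_mul m)]
    congr 1
    funext u
    ring
  have hodd : (∫ u : ℝ, u * qExp q3 (-(b * u ^ 2))) = 0 := by
    have h := integral_neg_eq_self (fun u : ℝ => u * qExp q3 (-(b * u ^ 2))) volume
    simp only [neg_sq, neg_mul, integral_neg] at h
    linarith
  rw [hsplit, hodd, zero_add, integral_const_mul, hEint]
  field_simp
end

section
/- If X follows the q-Gaussian N_q(m, σ²) with 1 ≤ q < 3, then the normalized (2q-1)-variance ∫ (x-m)² · f(x)^{2q-1}/ν_{2q-1} dx equals ((3-q)/(q+1))·σ², where ν_{2q-1} = ∫ f(x)^{2q-1} dx. -/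
open MeasureTheory Filter Real Set Topology

namespace QGaussAux

lemma integral_eq_zero_of_hasDerivAt {F G : ℝ → ℝ}
    (hd : ∀ x, HasDerivAt F (G x) x) (hi : Integrable G)
    (htop : Tendsto F atTop (𝓝 0)) (hbot : Tendsto F atBot (𝓝 0)) :
    ∫ x, G x = 0 := by
  have h1 : ∫ x in Iic (0:ℝ), G x = F 0 - 0 :=
    integral_Iic_of_hasDerivAt_of_tendsto' (fun x _ => hd x) hi.integrableOn hbot
  have h2 : ∫ x in Ioi (0:ℝ), G x = 0 - F 0 :=
    integral_Ioi_of_hasDerivAt_of_tendsto' (fun x _ => hd x) hi.integrableOn htop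
  have h3 := intervalIntegral.integral_Iic_add_Ioi (b := (0:ℝ)) (μ := volume) hi.integrableOn hi.integrableOn
  rw [h1, h2] at h3
  linarith

lemma cont_base {b : ℝ} (hb : 0 < b) (p : ℝ) :
    Continuous (fun x : ℝ => (1 + b * x ^ 2) ^ (-p)) := by
  apply Continuous.rpow_const (by continuity)
  intro x
  exact Or.inl (by positivity)

lemma integrable_base {b p : ℝ} (hb : 0 < b) (hp : 1/2 < p) :
    Integrable (fun x : ℝ => (1 + b * x ^ 2) ^ (-p)) := by
  have h2p : ((Module.finrank ℝ ℝ : ℕ) : ℝ) < 2 * p := by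
    simp [Module.finrank_self]; linarith
  have h := integrable_rpow_neg_one_add_norm_sq (E := ℝ) (μ := volume) h2p
  have h' : Integrable (fun x : ℝ => ((1:ℝ) + x ^ 2) ^ (-p)) := by
    have : (fun x : ℝ => ((1:ℝ) + ‖x‖ ^ 2) ^ (-(2*p) / 2)) =
        (fun x : ℝ => ((1:ℝ) + x ^ 2) ^ (-p)) := by
      funext x
      rw [Real.norm_eq_abs, sq_abs, show -(2*p)/2 = -p by ring]
    rwa [this] at h
  set c : ℝ := min 1 b with hc
  have hc0 : 0 < c := lt_min one_pos hb
  refine ((h'.const_mul (c ^ (-p))).mono' ((cont_base hb p).aestronglyMeasurable) ?_)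
  filter_upwards with x
  have hpos : (0:ℝ) < 1 + b * x ^ 2 := by positivity
  rw [Real.norm_eq_abs, abs_of_nonneg (Real.rpow_nonneg hpos.le _)]
  have hle : c * (1 + x ^ 2) ≤ 1 + b * x ^ 2 := by
    have h1 : c ≤ 1 := min_le_left _ _
    have h2 : c ≤ b := min_le_right _ _
    nlinarith [sq_nonneg x]
  calc (1 + b * x ^ 2) ^ (-p) ≤ (c * (1 + x ^ 2)) ^ (-p) :=
        Real.rpow_le_rpow_of_nonpos (by positivity) hle (by linarith)
    _ = c ^ (-p) * (1 + x ^ 2) ^ (-p) :=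
        Real.mul_rpow hc0.le (by positivity)

lemma integrable_sq_base {b p : ℝ} (hb : 0 < b) (hp : 3/2 < p) :
    Integrable (fun x : ℝ => x ^ 2 * (1 + b * x ^ 2) ^ (-p)) := by
  have h := (integrable_base hb (p := p - 1) (by linarith)).const_mul b⁻¹
  refine h.mono' ?_ ?_
  · exact (continuous_pow 2).mul (cont_base hb p) |>.aestronglyMeasurable
  filter_upwards with x
  have hpos : (0:ℝ) < 1 + b * x ^ 2 := by positivity
  rw [Real.norm_eq_abs, abs_of_nonneg (by positivity)]
  have key : (1 + b * x ^ 2) ^ (-(p-1)) = (1 + b * x ^ 2) * (1 + b * x ^ 2) ^ (-p) := by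
    rw [show -(p-1) = 1 + -p by ring, Real.rpow_add hpos, Real.rpow_one]
  rw [key]
  have hx2 : x ^ 2 ≤ b⁻¹ * (1 + b * x ^ 2) := by
    rw [inv_mul_eq_div, le_div_iff₀ hb]; nlinarith
  have := mul_le_mul_of_nonneg_right hx2 (Real.rpow_nonneg hpos.le (-p))
  calc x ^ 2 * (1 + b * x ^ 2) ^ (-p)
      ≤ b⁻¹ * (1 + b * x ^ 2) * (1 + b * x ^ 2) ^ (-p) := this
    _ = b⁻¹ * ((1 + b * x ^ 2) * (1 + b * x ^ 2) ^ (-p)) := by ring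

lemma tendsto_abs_mul_base {b s : ℝ} (hb : 0 < b) (hs : 1/2 < s) :
    Tendsto (fun x : ℝ => |x| * (1 + b * x ^ 2) ^ (-s)) atTop (𝓝 0) := by
  have hbound : ∀ᶠ x : ℝ in atTop,
      |x| * (1 + b * x ^ 2) ^ (-s) ≤ b ^ (-s) * x ^ (1 - 2*s) := by
    filter_upwards [eventually_ge_atTop (1:ℝ)] with x hx
    have hx0 : (0:ℝ) < x := by linarith
    have h1 : (1 + b * x ^ 2) ^ (-s) ≤ (b * x ^ 2) ^ (-s) :=
      Real.rpow_le_rpow_of_nonpos (by positivity) (by nlinarith) (by linarith)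
    have h2 : (b * x ^ 2) ^ (-s) = b ^ (-s) * (x ^ 2 : ℝ) ^ (-s) :=
      Real.mul_rpow hb.le (by positivity)
    have h3 : (x ^ 2 : ℝ) ^ (-s) = x ^ (-(2*s)) := by
      rw [← Real.rpow_natCast x 2, ← Real.rpow_mul hx0.le]
      norm_num
    have h4 : x * x ^ (-(2*s)) = x ^ (1 - 2*s) := by
      rw [show (1 - 2*s) = 1 + -(2*s) by ring, Real.rpow_add hx0, Real.rpow_one]
    calc |x| * (1 + b * x ^ 2) ^ (-s) ≤ x * ((b * x^2) ^ (-s)) := by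
          rw [abs_of_pos hx0]
          exact mul_le_mul_of_nonneg_left h1 hx0.le
      _ = b ^ (-s) * (x * x ^ (-(2*s))) := by rw [h2, h3]; ring
      _ = b ^ (-s) * x ^ (1 - 2*s) := by rw [h4]
  have hlim : Tendsto (fun x : ℝ => b ^ (-s) * x ^ (1 - 2*s)) atTop (𝓝 0) := by
    have := (tendsto_rpow_neg_atTop (y := 2*s - 1) (by linarith)).const_mul (b ^ (-s))
    simpa [show -(2*s-1) = 1 - 2*s by ring] using this
  refine squeeze_zero' ?_ hbound hlim
  filter_upwards with x
  positivity

lemma tendsto_mul_base {b s : ℝ} (hb : 0 < b) (hs : 1/2 < s) :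
    Tendsto (fun x : ℝ => x * (1 + b * x ^ 2) ^ (-s)) atTop (𝓝 0) ∧
    Tendsto (fun x : ℝ => x * (1 + b * x ^ 2) ^ (-s)) atBot (𝓝 0) := by
  have habs := tendsto_abs_mul_base hb hs
  have hnorm : ∀ x : ℝ, ‖x * (1 + b * x ^ 2) ^ (-s)‖ = |x| * (1 + b * x ^ 2) ^ (-s) := by
    intro x
    have : (0:ℝ) < 1 + b * x ^ 2 := by positivity
    rw [Real.norm_eq_abs, abs_mul, abs_of_nonneg (Real.rpow_nonneg this.le _)]
  constructor
  · rw [tendsto_zero_iff_norm_tendsto_zero]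
    exact habs.congr fun x => (hnorm x).symm
  · rw [tendsto_zero_iff_norm_tendsto_zero]
    have hcomp : Tendsto (fun x : ℝ => |(-x)| * (1 + b * (-x) ^ 2) ^ (-s)) atBot (𝓝 0) :=
      habs.comp tendsto_neg_atBot_atTop
    refine (hcomp.congr fun x => ?_)
    rw [hnorm x, abs_neg, neg_sq]

lemma tendsto_mul_exp {c : ℝ} (hc : 0 < c) :
    Tendsto (fun x : ℝ => x * Real.exp (-(c * x ^ 2))) atTop (𝓝 0) ∧
    Tendsto (fun x : ℝ => x * Real.exp (-(c * x ^ 2))) atBot (𝓝 0) := by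
  have h := tendsto_rpow_abs_mul_exp_neg_mul_sq_cocompact hc 1
  have hnorm : ∀ x : ℝ, ‖x * Real.exp (-(c * x ^ 2))‖ = |x| ^ (1:ℝ) * Real.exp (-c * x ^ 2) := by
    intro x
    rw [Real.norm_eq_abs, abs_mul, abs_of_nonneg (Real.exp_nonneg _), Real.rpow_one, neg_mul]
  constructor
  · rw [tendsto_zero_iff_norm_tendsto_zero]
    exact (h.mono_left _root_.atTop_le_cocompact).congr fun x => (hnorm x).symm
  · rw [tendsto_zero_iff_norm_tendsto_zero]
    exact (h.mono_left _root_.atBot_le_cocompact).congr fun x => (hnorm x).symm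

lemma hasDerivAt_inner (b : ℝ) (x : ℝ) :
    HasDerivAt (fun x : ℝ => 1 + b * x ^ 2) (2 * b * x) x := by
  have h := ((hasDerivAt_pow 2 x).const_mul b).const_add 1
  simpa [mul_comm, mul_assoc, mul_left_comm] using h

lemma hasDerivAt_F_poly {b p : ℝ} (hb : 0 < b) (x : ℝ) :
    HasDerivAt (fun x : ℝ => x * (1 + b * x ^ 2) ^ (-(p-1)))
      ((1 + b * x ^ 2) ^ (-p) - (b * (2*p - 3)) * (x ^ 2 * (1 + b * x ^ 2) ^ (-p))) x := by
  have hpos : (0:ℝ) < 1 + b * x ^ 2 := by positivity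
  have h1 : HasDerivAt (fun x : ℝ => (1 + b * x ^ 2) ^ (-(p-1)))
      (2 * b * x * (-(p-1)) * (1 + b * x ^ 2) ^ (-(p-1) - 1)) x :=
    (hasDerivAt_inner b x).rpow_const (Or.inl hpos.ne')
  have h2 := (hasDerivAt_id x).fun_mul h1
  have e1 : -(p-1) - 1 = -p := by ring
  have e2 : (1 + b * x ^ 2) ^ (-(p-1)) = (1 + b * x ^ 2) * (1 + b * x ^ 2) ^ (-p) := by
    rw [show -(p-1) = 1 + -p by ring, Real.rpow_add hpos, Real.rpow_one]
  refine h2.congr_deriv ?_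
  simp only [id_eq, one_mul]
  rw [e1, e2]
  ring

lemma core_poly {b p : ℝ} (hb : 0 < b) (hp : 3/2 < p)
    (hbase : Integrable (fun x : ℝ => (1 + b * x ^ 2) ^ (-p)))
    (hsq : Integrable (fun x : ℝ => x ^ 2 * (1 + b * x ^ 2) ^ (-p)))
    (htop : Tendsto (fun x : ℝ => x * (1 + b * x ^ 2) ^ (-(p-1))) atTop (𝓝 0))
    (hbot : Tendsto (fun x : ℝ => x * (1 + b * x ^ 2) ^ (-(p-1))) atBot (𝓝 0)) :
    ∫ x : ℝ, x ^ 2 * (1 + b * x ^ 2) ^ (-p) =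
      (b * (2*p - 3))⁻¹ * ∫ x : ℝ, (1 + b * x ^ 2) ^ (-p) := by
  have hc : 0 < b * (2*p - 3) := by
    apply mul_pos hb; linarith
  have hG : Integrable (fun x : ℝ =>
      (1 + b * x ^ 2) ^ (-p) - (b * (2*p - 3)) * (x ^ 2 * (1 + b * x ^ 2) ^ (-p))) :=
    hbase.sub (hsq.const_mul _)
  have h0 : ∫ x : ℝ, ((1 + b * x ^ 2) ^ (-p)
      - (b * (2*p - 3)) * (x ^ 2 * (1 + b * x ^ 2) ^ (-p))) = 0 :=
    integral_eq_zero_of_hasDerivAt (fun x => hasDerivAt_F_poly hb x) hG htop hbot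
  rw [integral_sub hbase (hsq.const_mul _), integral_const_mul, sub_eq_zero] at h0
  rw [h0, ← mul_assoc, inv_mul_cancel₀ (by positivity), one_mul]

lemma integrable_exp_base {c : ℝ} (hc : 0 < c) :
    Integrable (fun x : ℝ => Real.exp (-(c * x ^ 2))) := by
  simpa [neg_mul] using integrable_exp_neg_mul_sq hc

lemma integrable_sq_exp_base {c : ℝ} (hc : 0 < c) :
    Integrable (fun x : ℝ => x ^ 2 * Real.exp (-(c * x ^ 2))) := by
  have h := integrable_rpow_mul_exp_neg_mul_sq hc (s := 2) (by norm_num)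
  have : (fun x : ℝ => x ^ (2:ℝ) * Real.exp (-c * x ^ 2)) =
      (fun x : ℝ => x ^ 2 * Real.exp (-(c * x ^ 2))) := by
    funext x
    rw [show (2:ℝ) = ((2:ℕ):ℝ) by norm_num, Real.rpow_natCast, neg_mul]
  rwa [this] at h

lemma hasDerivAt_F_exp {c : ℝ} (x : ℝ) :
    HasDerivAt (fun x : ℝ => x * Real.exp (-(c * x ^ 2)))
      (Real.exp (-(c * x ^ 2)) - (2*c) * (x ^ 2 * Real.exp (-(c * x ^ 2)))) x := by
  have hinner : HasDerivAt (fun x : ℝ => -(c * x ^ 2)) (-(2 * c * x)) x := by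
    have := ((hasDerivAt_pow 2 x).const_mul c).fun_neg
    simpa [mul_comm, mul_assoc, mul_left_comm] using this
  have h1 := hinner.exp
  have h2 := (hasDerivAt_id x).fun_mul h1
  refine h2.congr_deriv ?_
  simp only [id_eq, one_mul]
  ring

lemma core_exp {c : ℝ} (hc : 0 < c)
    (htop : Tendsto (fun x : ℝ => x * Real.exp (-(c * x ^ 2))) atTop (𝓝 0))
    (hbot : Tendsto (fun x : ℝ => x * Real.exp (-(c * x ^ 2))) atBot (𝓝 0)) :
    ∫ x : ℝ, x ^ 2 * Real.exp (-(c * x ^ 2)) =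
      (2*c)⁻¹ * ∫ x : ℝ, Real.exp (-(c * x ^ 2)) := by
  have hbase := integrable_exp_base hc
  have hsq := integrable_sq_exp_base hc
  have hG : Integrable (fun x : ℝ =>
      Real.exp (-(c * x ^ 2)) - (2*c) * (x ^ 2 * Real.exp (-(c * x ^ 2)))) :=
    hbase.sub (hsq.const_mul _)
  have h0 : ∫ x : ℝ, (Real.exp (-(c * x ^ 2)) - (2*c) * (x ^ 2 * Real.exp (-(c * x ^ 2)))) = 0 :=
    integral_eq_zero_of_hasDerivAt (fun x => hasDerivAt_F_exp x) hG htop hbot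
  rw [integral_sub hbase (hsq.const_mul _), integral_const_mul, sub_eq_zero] at h0
  rw [h0, ← mul_assoc, inv_mul_cancel₀ (by positivity), one_mul]

lemma integral_pos_of_pos {h : ℝ → ℝ} (hpos : ∀ x, 0 < h x) (hi : Integrable h) :
    0 < ∫ x, h x := by
  rw [integral_pos_iff_support_of_nonneg (fun x => (hpos x).le) hi]
  have : Function.support h = Set.univ := by
    ext x; simp [Function.mem_support, (hpos x).ne']
  rw [this]
  simp [Real.volume_univ]

lemma assembly (m K γ : ℝ) (h : ℝ → ℝ) (hK : 0 < K)
    (hint : Integrable h) (hsq : Integrable (fun x => x ^ 2 * h x))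
    (hpos : 0 < ∫ x, h x)
    (hmom : ∫ x, x ^ 2 * h x = γ * ∫ x, h x) :
    ∫ x : ℝ, (x - m) ^ 2 * (K * h (x - m) / ∫ t : ℝ, K * h (t - m)) = γ := by
  have hN : ∫ t : ℝ, K * h (t - m) = K * ∫ x, h x := by
    rw [integral_const_mul]
    congr 1
    exact integral_sub_right_eq_self h m
  have hV : ∫ x : ℝ, (x - m) ^ 2 * (K * h (x - m)) = K * (γ * ∫ x, h x) := by
    have e : (fun x : ℝ => (x - m) ^ 2 * (K * h (x - m))) =
        (fun x : ℝ => K * ((fun y => y ^ 2 * h y) (x - m))) := by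
      funext x; ring
    rw [e, integral_const_mul, integral_sub_right_eq_self (fun y => y ^ 2 * h y) m, hmom]
  have hNne : (∫ t : ℝ, K * h (t - m)) ≠ 0 := by
    rw [hN]; positivity
  have e2 : (fun x : ℝ => (x - m) ^ 2 * (K * h (x - m) / ∫ t : ℝ, K * h (t - m))) =
      (fun x : ℝ => ((x - m) ^ 2 * (K * h (x - m))) * (∫ t : ℝ, K * h (t - m))⁻¹) := by
    funext x; ring
  rw [e2, integral_mul_const, hV, hN, mul_inv]
  field_simp

end QGaussAux

open QGaussAux


theorem qGauss_normalized_variance (q m σ : ℝ) (hq1 : 1 ≤ q) (hq3 : q < 3) (hσ : 0 < σ) :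
    (∫ x : ℝ, (x - m) ^ 2 *
        ((qGauss q m σ x) ^ (2 * q - 1) / (∫ t : ℝ, (qGauss q m σ t) ^ (2 * q - 1)))) =
      ((3 - q) / (q + 1)) * σ ^ 2 := by
  have hσ2 : (0:ℝ) < σ ^ 2 := by positivity
  rcases eq_or_lt_of_le hq1 with hq | hq
  · -- q = 1 : Gaussian case
    subst hq
    have hc : (0:ℝ) < (2 * σ ^ 2)⁻¹ := by positivity
    set c : ℝ := (2 * σ ^ 2)⁻¹ with hc_def
    have hCq : 0 < Cq 1 := by
      rw [Cq]
      have e : (fun x : ℝ => qExp 1 (-(x ^ 2))) = fun x : ℝ => Real.exp (-(1 * x ^ 2)) := by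
        funext x; simp [qExp]
      rw [e]
      exact integral_pos_of_pos (fun x => Real.exp_pos _) (integrable_exp_base one_pos)
    have hK : 0 < Real.sqrt (1 / (3 - 1)) / (σ * Cq 1) := by
      apply div_pos (Real.sqrt_pos.mpr (by norm_num)) (by positivity)
    have hrepr : ∀ x : ℝ, (qGauss 1 m σ x) ^ (2 * (1:ℝ) - 1) =
        (Real.sqrt (1 / (3 - 1)) / (σ * Cq 1)) * Real.exp (-(c * (x - m) ^ 2)) := by
      intro x
      have e1 : (2 * (1:ℝ) - 1) = (1:ℝ) := by norm_num
      have e2 : -(1 / (3 - (1:ℝ)) * (x - m) ^ 2 / σ ^ 2) = -(c * (x - m) ^ 2) := by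
        rw [hc_def]; ring
      rw [e1, Real.rpow_one, qGauss, e2]
      simp [qExp]
    simp only [hrepr]
    have htb := tendsto_mul_exp hc
    have hmom : ∫ x : ℝ, x ^ 2 * Real.exp (-(c * x ^ 2)) =
        (σ ^ 2) * ∫ x : ℝ, Real.exp (-(c * x ^ 2)) := by
      rw [core_exp hc htb.1 htb.2]
      congr 1
      have h3 : σ ^ 2 ≠ 0 := by positivity
      rw [hc_def]
      field_simp
    have hres := assembly m (Real.sqrt (1 / (3 - 1)) / (σ * Cq 1)) (σ ^ 2)
      (fun y => Real.exp (-(c * y ^ 2))) hK (integrable_exp_base hc)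
      (integrable_sq_exp_base hc)
      (integral_pos_of_pos (fun x => Real.exp_pos _) (integrable_exp_base hc)) hmom
    rw [show ((3 - (1:ℝ)) / (1 + 1)) * σ ^ 2 = σ ^ 2 by norm_num]
    exact hres
  · -- 1 < q
    have h3q : (0:ℝ) < 3 - q := by linarith
    have hq1' : (0:ℝ) < q - 1 := by linarith
    have hqne : q ≠ 1 := by linarith
    have h1q : (1:ℝ) - q ≠ 0 := by intro h; apply hqne; linarith
    set b : ℝ := (q - 1) / ((3 - q) * σ ^ 2) with hb_def
    set p : ℝ := (2 * q - 1) / (q - 1) with hp_def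
    have hb : 0 < b := by rw [hb_def]; positivity
    have hp : 3/2 < p := by
      rw [hp_def, div_lt_div_iff₀ (by norm_num) hq1']
      linarith
    have hCq : 0 < Cq q := by
      rw [Cq]
      have e : (fun x : ℝ => qExp q (-(x ^ 2))) =
          fun x : ℝ => (1 + (q - 1) * x ^ 2) ^ (-(q - 1)⁻¹) := by
        funext x
        rw [qExp, if_neg hqne]
        have e1 : 1 + (1 - q) * (-(x ^ 2)) = 1 + (q - 1) * x ^ 2 := by ring
        have e2 : max 0 (1 + (1 - q) * (-(x ^ 2))) = 1 + (q - 1) * x ^ 2 := by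
          rw [e1]; exact max_eq_right (by positivity)
        rw [e2]
        congr 1
        field_simp
        ring
      rw [e]
      have hexp : (1:ℝ)/2 < (q - 1)⁻¹ := by
        rw [show ((q:ℝ) - 1)⁻¹ = 1 / (q - 1) from (one_div _).symm,
          div_lt_div_iff₀ (by norm_num) hq1']
        linarith
      exact integral_pos_of_pos
        (fun x => Real.rpow_pos_of_pos (by positivity) _)
        (integrable_base hq1' hexp)
    have hK : 0 < Real.sqrt (1 / (3 - q)) / (σ * Cq q) := by
      apply div_pos (Real.sqrt_pos.mpr (by positivity)) (by positivity)
    set K : ℝ := Real.sqrt (1 / (3 - q)) / (σ * Cq q) with hK_def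
    have hK' : 0 < K ^ (2 * q - 1) := Real.rpow_pos_of_pos hK _
    have hrepr : ∀ x : ℝ, (qGauss q m σ x) ^ (2 * q - 1) =
        K ^ (2 * q - 1) * (1 + b * (x - m) ^ 2) ^ (-p) := by
      intro x
      have hbase : (0:ℝ) < 1 + b * (x - m) ^ 2 := by positivity
      have e1 : 1 + (1 - q) * (-(1 / (3 - q) * (x - m) ^ 2 / σ ^ 2)) =
          1 + b * (x - m) ^ 2 := by
        rw [hb_def]; field_simp; ring
      have e2 : qExp q (-(1 / (3 - q) * (x - m) ^ 2 / σ ^ 2)) =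
          (1 + b * (x - m) ^ 2) ^ (1 / (1 - q)) := by
        rw [qExp, if_neg hqne, e1, max_eq_right hbase.le]
      have eexp : 1 / (1 - q) * (2 * q - 1) = -p := by
        rw [hp_def]
        field_simp
        ring
      rw [qGauss, e2, Real.mul_rpow hK.le (Real.rpow_nonneg hbase.le _),
        ← Real.rpow_mul hbase.le, eexp]
    simp only [hrepr]
    have hsb : (1:ℝ)/2 < p - 1 := by linarith
    have htb := tendsto_mul_base hb hsb
    have hbase := integrable_base hb (by linarith : (1:ℝ)/2 < p)
    have hsq := integrable_sq_base hb hp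
    have hmom : ∫ x : ℝ, x ^ 2 * (1 + b * x ^ 2) ^ (-p) =
        (((3 - q) / (q + 1)) * σ ^ 2) * ∫ x : ℝ, (1 + b * x ^ 2) ^ (-p) := by
      rw [core_poly hb hp hbase hsq htb.1 htb.2]
      congr 1
      have hbp : b * (2 * p - 3) = (q + 1) / ((3 - q) * σ ^ 2) := by
        rw [hb_def, hp_def]
        field_simp
        ring
      rw [hbp]
      have h1 : (3 - q) ≠ 0 := h3q.ne'
      have h2 : (q + 1) ≠ 0 := by linarith
      have h3 : σ ^ 2 ≠ 0 := by positivity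
      field_simp
    exact assembly m (K ^ (2 * q - 1)) (((3 - q) / (q + 1)) * σ ^ 2)
      (fun y => (1 + b * y ^ 2) ^ (-p)) hK' hbase hsq
      (integral_pos_of_pos (fun x => Real.rpow_pos_of_pos (by positivity) _) hbase) hmom
end
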